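/- (Multilevel cost bound, case η=0, γ=0, β=1, α=1.) Let H > 1, T > 0, c₁,…,c₄ > 0, ε ∈ (0, e^{−1}), L = ⌈log(√32 c₁ T ε^{−1})/log H⌉, h_l = H^{−l}T, K_l = ⌈32 ε^{−2} c₂²(L+1)²⌉, M_l = ⌈32 ε^{−2} c₃² h_l (L+1)²⌉. Then the total cost ∑_{l=0}^{L} c₄ h_l^{−1} M_l K_l is bounded by c₅ ε^{−4} |log ε|^5 for a constant c₅ depending only on H, T, c₁,…,c₄. -/
import Mathlib


set_option maxHeartbeats 1000000 in
/-- Multilevel cost bound in the case `η = 0, γ = 0, β = 1, α = 1`: the total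
training cost is of order `ε⁻⁴ |log ε|⁵`. -/
theorem multilevel_cost_bound_eta0_gamma0_beta1_alpha1
    (H T c₁ c₂ c₃ c₄ : ℝ) (hH : 1 < H) (hT : 0 < T)
    (hc₁ : 0 < c₁) (hc₂ : 0 < c₂) (hc₃ : 0 < c₃) (hc₄ : 0 < c₄) :
    ∃ c₅ > 0, ∀ ε : ℝ, 0 < ε → ε < Real.exp (-1) →
      ∑ l ∈ Finset.range
          ((⌈Real.log (Real.sqrt 32 * c₁ * T * ε⁻¹) / Real.log H⌉ : ℤ).toNat + 1),
        c₄ * (H ^ (-(l : ℝ)) * T)⁻¹ *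
          ((⌈32 * ε ^ (-(2 : ℝ)) * c₃ ^ 2 * (H ^ (-(l : ℝ)) * T) *
              (((⌈Real.log (Real.sqrt 32 * c₁ * T * ε⁻¹) / Real.log H⌉ : ℤ) : ℝ) + 1) ^ 2⌉₊ : ℝ)) *
          ((⌈32 * ε ^ (-(2 : ℝ)) * c₂ ^ 2 *
              (((⌈Real.log (Real.sqrt 32 * c₁ * T * ε⁻¹) / Real.log H⌉ : ℤ) : ℝ) + 1) ^ 2⌉₊ : ℝ))
        ≤ c₅ * ε ^ (-(4 : ℝ)) * |Real.log ε| ^ 5 := by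
  have hlogH : 0 < Real.log H := Real.log_pos hH
  have hH0 : (0:ℝ) < H := by linarith
  set s : ℝ := Real.sqrt 32 * c₁ * T with hs_def
  have hs : 0 < s := by
    have h32 : (0:ℝ) < Real.sqrt 32 := Real.sqrt_pos.mpr (by norm_num)
    positivity
  set C₇ : ℝ := (|Real.log s| + 1) / Real.log H + 2 with hC₇_def
  have hC₇ : 0 < C₇ := by positivity
  set C₆ : ℝ := (1 + H * s) / T with hC₆_def
  have hC₆ : 0 < C₆ := by
    have h1 : 0 < 1 + H * s := by positivity
    rw [hC₆_def]; positivity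
  set A : ℝ := 32 * c₃ ^ 2 * C₇ ^ 2 + C₆ with hA_def
  have hA : 0 < A := by rw [hA_def]; positivity
  set B : ℝ := 32 * c₂ ^ 2 * C₇ ^ 2 + 1 with hB_def
  have hB : 0 < B := by rw [hB_def]; positivity
  refine ⟨C₇ * (c₄ * A * B), by positivity, ?_⟩
  intro ε hε hε'
  set E : ℝ := |Real.log ε| with hE_def
  have hεlt1 : ε < 1 := lt_trans hε' (by
    have := Real.exp_lt_one_iff.mpr (show (-1:ℝ) < 0 by norm_num)
    simpa using this)
  have hεinv : 1 ≤ ε⁻¹ := one_le_inv_iff₀.mpr ⟨hε, hεlt1.le⟩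
  have hlogε : Real.log ε < -1 := by
    have := Real.log_lt_log hε hε'
    simpa [Real.log_exp] using this
  have hE : 1 ≤ E := by
    rw [hE_def, abs_of_neg (by linarith)]
    linarith
  have hEpos : 0 < E := lt_of_lt_of_le one_pos hE
  set x : ℝ := Real.log (s * ε⁻¹) / Real.log H with hx_def
  set Lz : ℤ := ⌈x⌉ with hLz_def
  set N : ℕ := Lz.toNat with hN_def
  have hxabs : |x| + 2 ≤ C₇ * E := by
    have hlog_prod : Real.log (s * ε⁻¹) = Real.log s - Real.log ε := by
      rw [Real.log_mul (ne_of_gt hs) (by positivity), Real.log_inv]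
      ring
    have h1 : |x| ≤ (|Real.log s| + E) / Real.log H := by
      rw [hx_def, abs_div, abs_of_pos hlogH, hlog_prod]
      gcongr
      exact (abs_sub _ _).trans (by rw [hE_def])
    have h2 : (|Real.log s| + E) / Real.log H ≤ (|Real.log s| + 1) / Real.log H * E := by
      rw [div_mul_eq_mul_div]
      gcongr
      nlinarith [abs_nonneg (Real.log s)]
    have h3 : (2:ℝ) ≤ 2 * E := by linarith
    calc |x| + 2 ≤ (|Real.log s| + 1) / Real.log H * E + 2 * E := by linarith
      _ = C₇ * E := by rw [hC₇_def]; ring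
  have hceil_lb : x ≤ (Lz : ℝ) := Int.le_ceil x
  have hceil_ub : (Lz : ℝ) < x + 1 := Int.ceil_lt_add_one x
  have hLx : |(Lz : ℝ) + 1| ≤ C₇ * E := by
    rw [abs_le]
    constructor
    · linarith [neg_abs_le x]
    · linarith [le_abs_self x]
  have hLxsq : ((Lz : ℝ) + 1) ^ 2 ≤ C₇ ^ 2 * E ^ 2 := by
    calc ((Lz : ℝ) + 1) ^ 2 = |(Lz : ℝ) + 1| ^ 2 := (sq_abs _).symm
      _ ≤ (C₇ * E) ^ 2 := pow_le_pow_left₀ (abs_nonneg _) hLx 2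
      _ = C₇ ^ 2 * E ^ 2 := by ring
  have hNcard : (N : ℝ) + 1 ≤ C₇ * E := by
    rcases le_or_gt Lz 0 with h | h
    · have hN0 : N = 0 := by simp [hN_def, Int.toNat_of_nonpos h]
      rw [hN0]
      push_cast
      linarith [abs_nonneg x]
    · have h0 : (N : ℤ) = Lz := Int.toNat_of_nonneg h.le
      have hNr : (N : ℝ) = (Lz : ℝ) := by exact_mod_cast h0
      rw [hNr]
      calc (Lz : ℝ) + 1 ≤ |(Lz : ℝ) + 1| := le_abs_self _
        _ ≤ C₇ * E := hLx
  have hHpowN : H ^ (N : ℝ) ≤ (1 + H * s) * ε⁻¹ := by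
    rcases le_or_gt Lz 0 with h | h
    · have hN0 : N = 0 := by simp [hN_def, Int.toNat_of_nonpos h]
      rw [hN0]
      simp only [Nat.cast_zero, Real.rpow_zero]
      nlinarith [hεinv, mul_pos hH0 hs]
    · have h0 : (N : ℤ) = Lz := Int.toNat_of_nonneg h.le
      have hNr : (N : ℝ) = (Lz : ℝ) := by exact_mod_cast h0
      have h1 : H ^ (N : ℝ) ≤ H ^ (x + 1) := by
        apply Real.rpow_le_rpow_of_exponent_le hH.le
        rw [hNr]; linarith
      have h2 : H ^ (x + 1) = s * ε⁻¹ * H := by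
        rw [Real.rpow_add hH0, Real.rpow_one]
        congr 1
        rw [Real.rpow_def_of_pos hH0, hx_def, mul_comm,
          div_mul_cancel₀ _ (ne_of_gt hlogH), Real.exp_log (by positivity)]
      rw [h2] at h1
      nlinarith [hεinv, Real.rpow_pos_of_pos hH0 (N:ℝ)]
  have hP2 : ε ^ (-(2:ℝ)) = ε⁻¹ * ε⁻¹ := by
    rw [show (-(2:ℝ)) = (-1) + (-1) by norm_num, Real.rpow_add hε, Real.rpow_neg_one]
  have hP4 : ε ^ (-(4:ℝ)) = ε ^ (-(2:ℝ)) * ε ^ (-(2:ℝ)) := by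
    rw [← Real.rpow_add hε]; norm_num
  set P : ℝ := ε ^ (-(2:ℝ)) with hP_def
  have hP1 : 1 ≤ P := by rw [hP2]; nlinarith
  have hPpos : 0 < P := lt_of_lt_of_le one_pos hP1
  have hE2 : (1:ℝ) ≤ E ^ 2 := by nlinarith
  have hεinvP : ε⁻¹ ≤ P * E ^ 2 := by
    rw [hP2]
    have h1 : (1:ℝ) ≤ ε⁻¹ * E ^ 2 :=
      (mul_one (1:ℝ)).symm.le.trans
        (mul_le_mul hεinv hE2 zero_le_one (le_trans zero_le_one hεinv))
    calc ε⁻¹ = ε⁻¹ * 1 := (mul_one _).symm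
      _ ≤ ε⁻¹ * (ε⁻¹ * E ^ 2) := by
          apply mul_le_mul_of_nonneg_left h1 (by positivity)
      _ = ε⁻¹ * ε⁻¹ * E ^ 2 := by ring
  have h1PE : 1 ≤ P * E ^ 2 :=
    (mul_one (1:ℝ)).symm.le.trans
      (mul_le_mul hP1 hE2 zero_le_one (le_trans zero_le_one hP1))
  have hterm : ∀ l ∈ Finset.range (N + 1),
      c₄ * (H ^ (-(l : ℝ)) * T)⁻¹ *
          ((⌈32 * P * c₃ ^ 2 * (H ^ (-(l : ℝ)) * T) * ((Lz : ℝ) + 1) ^ 2⌉₊ : ℝ)) *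
          ((⌈32 * P * c₂ ^ 2 * ((Lz : ℝ) + 1) ^ 2⌉₊ : ℝ))
        ≤ c₄ * A * B * (P * P * E ^ 4) := by
    intro l hl
    have hlN : (l : ℝ) ≤ (N : ℝ) := by
      have := Finset.mem_range.mp hl
      exact_mod_cast Nat.lt_succ_iff.mp this
    set h : ℝ := H ^ (-(l : ℝ)) * T with hh_def
    have hrp : 0 < H ^ (-(l:ℝ)) := Real.rpow_pos_of_pos hH0 _
    have hhpos : 0 < h := by rw [hh_def]; positivity
    have hhinv : h⁻¹ ≤ C₆ * ε⁻¹ := by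
      have h1 : h⁻¹ = H ^ (l : ℝ) * T⁻¹ := by
        rw [hh_def, mul_inv, ← Real.rpow_neg hH0.le, neg_neg]
      have h2 : H ^ (l : ℝ) ≤ H ^ (N : ℝ) :=
        Real.rpow_le_rpow_of_exponent_le hH.le hlN
      rw [h1]
      calc H ^ (l : ℝ) * T⁻¹ ≤ ((1 + H * s) * ε⁻¹) * T⁻¹ := by
            apply mul_le_mul_of_nonneg_right (h2.trans hHpowN) (by positivity)
        _ = C₆ * ε⁻¹ := by rw [hC₆_def]; ring
    have hMarg : (0:ℝ) ≤ 32 * P * c₃ ^ 2 * h * ((Lz : ℝ) + 1) ^ 2 := by positivity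
    have hKarg : (0:ℝ) ≤ 32 * P * c₂ ^ 2 * ((Lz : ℝ) + 1) ^ 2 := by positivity
    have hM : ((⌈32 * P * c₃ ^ 2 * h * ((Lz : ℝ) + 1) ^ 2⌉₊ : ℝ))
        ≤ 32 * P * c₃ ^ 2 * h * ((Lz : ℝ) + 1) ^ 2 + 1 :=
      (Nat.ceil_lt_add_one hMarg).le
    have hK : ((⌈32 * P * c₂ ^ 2 * ((Lz : ℝ) + 1) ^ 2⌉₊ : ℝ))
        ≤ 32 * P * c₂ ^ 2 * ((Lz : ℝ) + 1) ^ 2 + 1 :=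
      (Nat.ceil_lt_add_one hKarg).le
    have hKb : ((⌈32 * P * c₂ ^ 2 * ((Lz : ℝ) + 1) ^ 2⌉₊ : ℝ)) ≤ B * (P * E ^ 2) := by
      calc ((⌈32 * P * c₂ ^ 2 * ((Lz : ℝ) + 1) ^ 2⌉₊ : ℝ))
          ≤ 32 * P * c₂ ^ 2 * ((Lz : ℝ) + 1) ^ 2 + 1 := hK
        _ ≤ 32 * P * c₂ ^ 2 * (C₇ ^ 2 * E ^ 2) + 1 := by gcongr
        _ ≤ B * (P * E ^ 2) := by rw [hB_def]; linarith [h1PE]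
    have hhM : h⁻¹ * ((⌈32 * P * c₃ ^ 2 * h * ((Lz : ℝ) + 1) ^ 2⌉₊ : ℝ)) ≤ A * (P * E ^ 2) := by
      calc h⁻¹ * ((⌈32 * P * c₃ ^ 2 * h * ((Lz : ℝ) + 1) ^ 2⌉₊ : ℝ))
          ≤ h⁻¹ * (32 * P * c₃ ^ 2 * h * ((Lz : ℝ) + 1) ^ 2 + 1) := by
            apply mul_le_mul_of_nonneg_left hM (by positivity)
        _ = 32 * P * c₃ ^ 2 * ((Lz : ℝ) + 1) ^ 2 * (h⁻¹ * h) + h⁻¹ := by ring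
        _ = 32 * P * c₃ ^ 2 * ((Lz : ℝ) + 1) ^ 2 + h⁻¹ := by
            rw [inv_mul_cancel₀ (ne_of_gt hhpos), mul_one]
        _ ≤ 32 * P * c₃ ^ 2 * (C₇ ^ 2 * E ^ 2) + C₆ * ε⁻¹ := by gcongr
        _ ≤ 32 * P * c₃ ^ 2 * (C₇ ^ 2 * E ^ 2) + C₆ * (P * E ^ 2) := by
            have := mul_le_mul_of_nonneg_left hεinvP hC₆.le
            linarith
        _ = A * (P * E ^ 2) := by rw [hA_def]; ring
    have hMK := mul_le_mul hhM hKb (Nat.cast_nonneg _)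
      (mul_nonneg hA.le (by positivity))
    calc c₄ * h⁻¹ *
          ((⌈32 * P * c₃ ^ 2 * h * ((Lz : ℝ) + 1) ^ 2⌉₊ : ℝ)) *
          ((⌈32 * P * c₂ ^ 2 * ((Lz : ℝ) + 1) ^ 2⌉₊ : ℝ))
        = c₄ * (h⁻¹ * ((⌈32 * P * c₃ ^ 2 * h * ((Lz : ℝ) + 1) ^ 2⌉₊ : ℝ)) *
            ((⌈32 * P * c₂ ^ 2 * ((Lz : ℝ) + 1) ^ 2⌉₊ : ℝ))) := by ring
      _ ≤ c₄ * (A * (P * E ^ 2) * (B * (P * E ^ 2))) :=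
          mul_le_mul_of_nonneg_left hMK hc₄.le
      _ = c₄ * A * B * (P * P * E ^ 4) := by ring
  have hsum := Finset.sum_le_card_nsmul (Finset.range (N + 1)) _ _ hterm
  rw [Finset.card_range, nsmul_eq_mul] at hsum
  have hNc : ((N + 1 : ℕ) : ℝ) = (N : ℝ) + 1 := by push_cast; ring
  calc ∑ l ∈ Finset.range (N + 1),
        c₄ * (H ^ (-(l : ℝ)) * T)⁻¹ *
          ((⌈32 * P * c₃ ^ 2 * (H ^ (-(l : ℝ)) * T) * ((Lz : ℝ) + 1) ^ 2⌉₊ : ℝ)) *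
          ((⌈32 * P * c₂ ^ 2 * ((Lz : ℝ) + 1) ^ 2⌉₊ : ℝ))
      ≤ ((N : ℝ) + 1) * (c₄ * A * B * (P * P * E ^ 4)) := by rw [← hNc]; exact hsum
    _ ≤ (C₇ * E) * (c₄ * A * B * (P * P * E ^ 4)) := by
        apply mul_le_mul_of_nonneg_right hNcard
        have : 0 < c₄ * A * B * (P * P * E ^ 4) := by positivity
        exact this.le
    _ = C₇ * (c₄ * A * B) * ε ^ (-(4:ℝ)) * E ^ 5 := by rw [hP4]; ring
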